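/- Let H be a Hopf algebra and 𝔸 an (H,μ)-bimodule which is also an algebra satisfying the generalized associativity conditions (PQ)ξ = P(Qξ), (Pξ)Q = P(ξQ), ξ(PQ) = (ξP)Q for all ξ ∈ H, P,Q ∈ 𝔸 (and ξ·1 = 1·ξ if 𝔸 is unital). Then the adjoint action ξ ▶ P := ξ₁ P S(ξ₂) makes 𝔸 a left H-module algebra, and for any twist F of H the map D_F : 𝔸_⋆ → 𝔸, D_F(P) := (f̄^α ▶ P) f̄_α = f̄^α₁ P S(f̄^α₂) f̄_α, is an algebra isomorphism from the twisted algebra 𝔸_⋆ (with product P ⋆ Q = (f̄^α ▶ P)(f̄_α ▶ Q)) to 𝔸. -/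

import Mathlib

/-!
STATEMENT 4: the adjoint action makes an (H,μ)-bimodule algebra 𝔸 into a left
H-module algebra, and D_F : 𝔸_⋆ → 𝔸 is an algebra isomorphism.
-/

open TensorProduct

noncomputable section

variable (K : Type*) [CommRing K] (H : Type*) [Ring H] [HopfAlgebra K H]

namespace TwistPaper

def muH : H ⊗[K] H →ₗ[K] H := LinearMap.mul' K H
def ΔH : H →ₗ[K] H ⊗[K] H := Coalgebra.comul
def εH : H →ₗ[K] K := Coalgebra.counit
def SH : H →ₗ[K] H := HopfAlgebra.antipode (R := K)

def ins3 : H ⊗[K] H →ₗ[K] H ⊗[K] (H ⊗[K] H) :=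
  LinearMap.lTensor H ((TensorProduct.mk K H H).flip 1)
def ins1 : H ⊗[K] H →ₗ[K] H ⊗[K] (H ⊗[K] H) :=
  TensorProduct.mk K H (H ⊗[K] H) 1
def comulLeft : H ⊗[K] H →ₗ[K] H ⊗[K] (H ⊗[K] H) :=
  (TensorProduct.assoc K H H H).toLinearMap ∘ₗ (ΔH K H).rTensor H
def comulRight : H ⊗[K] H →ₗ[K] H ⊗[K] (H ⊗[K] H) :=
  (ΔH K H).lTensor H
def counitLeft : H ⊗[K] H →ₗ[K] H :=
  (TensorProduct.lid K H).toLinearMap ∘ₗ (εH K H).rTensor H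
def counitRight : H ⊗[K] H →ₗ[K] H :=
  (TensorProduct.rid K H).toLinearMap ∘ₗ (εH K H).lTensor H

/-- `F` is a twist of the Hopf algebra `H` with inverse `Finv`. -/
structure IsTwist (F Finv : H ⊗[K] H) : Prop where
  mul_inv : F * Finv = 1
  inv_mul : Finv * F = 1
  cocycle : ins3 K H F * comulLeft K H F = ins1 K H F * comulRight K H F
  counit_left : counitLeft K H F = 1
  counit_right : counitRight K H F = 1

/-- The twisted coproduct `Δ^F(ξ) = F Δ(ξ) F⁻¹`. -/
def twistComul (F Finv : H ⊗[K] H) : H →ₗ[K] H ⊗[K] H :=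
  LinearMap.mulLeft K F ∘ₗ LinearMap.mulRight K Finv ∘ₗ ΔH K H

/-- `χ = f^α S(f_α)`. -/
def chi (F : H ⊗[K] H) : H := muH K H ((SH K H).lTensor H F)
/-- `χ⁻¹ = S(f̄^α) f̄_α`. -/
def chiInv (Finv : H ⊗[K] H) : H := muH K H ((SH K H).rTensor H Finv)

/-- The twisted antipode `S^F(ξ) = χ S(ξ) χ⁻¹`. -/
def twistAntipode (F Finv : H ⊗[K] H) : H →ₗ[K] H :=
  LinearMap.mulLeft K (chi K H F) ∘ₗ LinearMap.mulRight K (chiInv K H Finv) ∘ₗ SH K H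

/-- `sw x f g c v w = Σ c (f x¹ v) (g x² w)` for `x = Σ x¹ ⊗ x²`. -/
def sw {V W V' W' Z : Type*}
    [AddCommGroup V] [Module K V] [AddCommGroup W] [Module K W]
    [AddCommGroup V'] [Module K V'] [AddCommGroup W'] [Module K W']
    [AddCommGroup Z] [Module K Z]
    (x : H ⊗[K] H) (f : H →ₗ[K] V →ₗ[K] V') (g : H →ₗ[K] W →ₗ[K] W')
    (c : V' →ₗ[K] W' →ₗ[K] Z) : V →ₗ[K] W →ₗ[K] Z :=
  ((TensorProduct.mapBilinear (RingHom.id K) H H V' W').compr₂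
      (TensorProduct.lift c ∘ₗ LinearMap.applyₗ (R := K) x)).compl₁₂ f.flip g.flip

/-- `ρ` is a left `H`-module structure. -/
def IsHAction {V : Type*} [AddCommGroup V] [Module K V] (ρ : H →ₗ[K] V →ₗ[K] V) : Prop :=
  (∀ ξ ζ : H, ∀ v : V, ρ (ξ * ζ) v = ρ ξ (ρ ζ v)) ∧ (∀ v : V, ρ 1 v = v)

variable {M : Type*} [AddCommGroup M] [Module K M]

/-- `twistEnd F1 F2 (η ⊗ ζ) = F1 η ∘ₗ F2 ζ` as an operator on `M`. -/
def twistEnd (F1 F2 : H →ₗ[K] M →ₗ[K] M) : H ⊗[K] H →ₗ[K] M →ₗ[K] M :=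
  TensorProduct.lift ((LinearMap.llcomp K M M M ∘ₗ F1).compl₂ F2)

/-- `𝔸` (with product `m`) is an `(H,μ)`-bimodule (left action `L`, right action `Rm`)
satisfying the generalized associativity conditions
`(PQ)ξ = P(Qξ)`, `(Pξ)Q = P(ξQ)`, `ξ(PQ) = (ξP)Q`. -/
structure IsHBimoduleAlgebra (m : M →ₗ[K] M →ₗ[K] M) (L Rm : H →ₗ[K] M →ₗ[K] M) : Prop where
  left_mul : ∀ (ξ ζ : H) (P : M), L (ξ * ζ) P = L ξ (L ζ P)
  left_one : ∀ P : M, L 1 P = P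
  right_mul : ∀ (ξ ζ : H) (P : M), Rm (ξ * ζ) P = Rm ζ (Rm ξ P)
  right_one : ∀ P : M, Rm 1 P = P
  commute : ∀ (ξ ζ : H) (P : M), L ξ (Rm ζ P) = Rm ζ (L ξ P)
  assoc1 : ∀ (ξ : H) (P Q : M), Rm ξ (m P Q) = m P (Rm ξ Q)
  assoc2 : ∀ (ξ : H) (P Q : M), m (Rm ξ P) Q = m P (L ξ Q)
  assoc3 : ∀ (ξ : H) (P Q : M), L ξ (m P Q) = m (L ξ P) Q

/-- The `H`-adjoint action `ξ ▶ P = ξ₁ P S(ξ₂)`. -/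
def adjAct (L Rm : H →ₗ[K] M →ₗ[K] M) : H →ₗ[K] M →ₗ[K] M :=
  twistEnd K H L (Rm ∘ₗ SH K H) ∘ₗ ΔH K H

/-- The deformation map `D_F(P) = (f̄^α ▶ P) f̄_α`. -/
def DF (Finv : H ⊗[K] H) (L Rm : H →ₗ[K] M →ₗ[K] M) : M →ₗ[K] M :=
  twistEnd K H Rm (adjAct K H L Rm) (TensorProduct.comm K H H Finv)

/-- The star product `P ⋆ Q = (f̄^α ▶ P)(f̄_α ▶ Q)` on `𝔸`. -/
def starAlg (Finv : H ⊗[K] H) (m : M →ₗ[K] M →ₗ[K] M) (L Rm : H →ₗ[K] M →ₗ[K] M) :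
    M →ₗ[K] M →ₗ[K] M :=
  sw K H Finv (adjAct K H L Rm) (adjAct K H L Rm) m


set_option synthInstance.maxHeartbeats 1000000

/-! ### Auxiliary development -/

open LinearMap TensorProduct Coalgebra HopfAlgebra
open scoped Coalgebra

section AuxBasic

/-- `Θ(x ⊗ y) = S(x) y`. -/
def Th : H ⊗[K] H →ₗ[K] H := muH K H ∘ₗ (SH K H).rTensor H
/-- `Ψ₂(x ⊗ y) = x S(y)`. -/
def Ps : H ⊗[K] H →ₗ[K] H := muH K H ∘ₗ (SH K H).lTensor H

variable {K H}

@[simp] lemma muH_tmul (a b : H) : muH K H (a ⊗ₜ[K] b) = a * b := by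
  simp [muH]

@[simp] lemma Th_tmul (a b : H) : Th K H (a ⊗ₜ[K] b) = SH K H a * b := by
  simp [Th]

@[simp] lemma Ps_tmul (a b : H) : Ps K H (a ⊗ₜ[K] b) = a * SH K H b := by
  simp [Ps]

lemma Th_comul (h : H) : Th K H (ΔH K H h) = algebraMap K H (εH K H h) := by
  simpa [Th, ΔH, εH, SH, muH] using HopfAlgebra.mul_antipode_rTensor_comul_apply (R := K) h

lemma Ps_comul (h : H) : Ps K H (ΔH K H h) = algebraMap K H (εH K H h) := by
  simpa [Ps, ΔH, εH, SH, muH] using HopfAlgebra.mul_antipode_lTensor_comul_apply (R := K) h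

lemma sum_eps_left {a : H} (r : Coalgebra.Repr K a (H × H)) :
    ∑ i ∈ r.index, εH K H (r.left i) • r.right i = a := by
  have h := Coalgebra.sum_counit_tmul_eq (R := K) r
  have h2 : (TensorProduct.lid K H).toLinearMap
      (∑ i ∈ r.index, Coalgebra.counit (R := K) (r.left i) ⊗ₜ[K] r.right i)
      = (TensorProduct.lid K H).toLinearMap ((1:K) ⊗ₜ[K] a) := by rw [h]
  rw [map_sum] at h2
  simpa [εH] using h2

lemma sum_eps_right {a : H} (r : Coalgebra.Repr K a (H × H)) :
    ∑ i ∈ r.index, εH K H (r.right i) • r.left i = a := by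
  have h := Coalgebra.sum_tmul_counit_eq (R := K) r
  have h2 : (TensorProduct.rid K H).toLinearMap
      (∑ i ∈ r.index, r.left i ⊗ₜ[K] Coalgebra.counit (R := K) (r.right i))
      = (TensorProduct.rid K H).toLinearMap (a ⊗ₜ[K] (1:K)) := by rw [h]
  rw [map_sum] at h2
  simpa [εH] using h2

lemma repr_eq {a : H} (r : Coalgebra.Repr K a (H × H)) :
    ∑ i ∈ r.index, r.left i ⊗ₜ[K] r.right i = ΔH K H a := r.eq

lemma sum_S_mul {a : H} (r : Coalgebra.Repr K a (H × H)) :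
    ∑ i ∈ r.index, SH K H (r.left i) * r.right i = algebraMap K H (εH K H a) := by
  simpa [SH, εH] using HopfAlgebra.sum_antipode_mul_eq_algebraMap_counit (R := K) r

lemma sum_mul_S {a : H} (r : Coalgebra.Repr K a (H × H)) :
    ∑ i ∈ r.index, r.left i * SH K H (r.right i) = algebraMap K H (εH K H a) := by
  simpa [SH, εH] using HopfAlgebra.sum_mul_antipode_eq_algebraMap_counit (R := K) r

/-- Coassociativity for triple Sweedler sums of products. -/
lemma coassoc3 (f g h : H →ₗ[K] H) {a : H} (r : Coalgebra.Repr K a (H × H))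
    (r₁ : ∀ i : r.ι, Coalgebra.Repr K (r.left i) (H × H)) (r₂ : ∀ i : r.ι, Coalgebra.Repr K (r.right i) (H × H)) :
    ∑ i ∈ r.index, ∑ j ∈ (r₁ i).index,
      f ((r₁ i).left j) * (g ((r₁ i).right j) * h (r.right i))
    = ∑ i ∈ r.index, ∑ j ∈ (r₂ i).index,
      f (r.left i) * (g ((r₂ i).left j) * h ((r₂ i).right j)) := by
  have h3 := Coalgebra.sum_map_tmul_tmul_eq (R := K) f g h a (repr := r) (a₁ := r₁) (a₂ := r₂)
  have := congrArg (fun t => (muH K H) ((LinearMap.lTensor H (muH K H)) t)) h3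
  simpa [map_sum] using this.symm

end AuxBasic
section Antimult

variable {K H}

lemma algebraMap_mul'' (r : K) (x : H) : algebraMap K H r * x = r • x :=
  (Algebra.smul_def r x).symm

lemma mul_algebraMap'' (x : H) (r : K) : x * algebraMap K H r = r • x := by
  rw [← Algebra.commutes r x]; exact (Algebra.smul_def r x).symm

theorem S_one : SH K H (1 : H) = 1 := by
  have h := Th_comul (K := K) (H := H) (1 : H)
  simpa [ΔH, εH, Algebra.TensorProduct.one_def] using h

lemma smul_S_mulLeft_sum {b : H} (x : H) (rb : Coalgebra.Repr K b (H × H)) :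
    ∑ j ∈ rb.index, εH K H (rb.right j) • SH K H (x * rb.left j) = SH K H (x * b) := by
  have h1 : ∑ j ∈ rb.index, εH K H (rb.right j) • (x * rb.left j) = x * b := by
    simp_rw [← mul_smul_comm, ← Finset.mul_sum, sum_eps_right rb]
  simpa [map_sum] using congrArg (SH K H) h1

lemma smul_S_mulRight_sum {a : H} (b : H) (ra : Coalgebra.Repr K a (H × H)) :
    ∑ i ∈ ra.index, εH K H (ra.right i) • SH K H (ra.left i * b) = SH K H (a * b) := by
  have h1 : ∑ i ∈ ra.index, εH K H (ra.right i) • (ra.left i * b) = a * b := by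
    simp_rw [← smul_mul_assoc, ← Finset.sum_mul, sum_eps_right ra]
  simpa [map_sum] using congrArg (SH K H) h1

theorem S_mul (a b : H) : SH K H (a * b) = SH K H b * SH K H a := by
  classical
  let ra : Coalgebra.Repr K a (H × H) := ℛ K a
  let rb : Coalgebra.Repr K b (H × H) := ℛ K b
  let raa : ∀ i : ra.ι, Coalgebra.Repr K (ra.left i) (H × H) := fun i => ℛ K _
  let raa' : ∀ i : ra.ι, Coalgebra.Repr K (ra.right i) (H × H) := fun i => ℛ K _
  let rbb : ∀ j : rb.ι, Coalgebra.Repr K (rb.left j) (H × H) := fun j => ℛ K _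
  let rbb' : ∀ j : rb.ι, Coalgebra.Repr K (rb.right j) (H × H) := fun j => ℛ K _
  set T : H := ∑ i ∈ ra.index, ∑ i' ∈ (raa i).index, ∑ j ∈ rb.index, ∑ j' ∈ (rbb j).index,
      SH K H ((raa i).left i' * (rbb j).left j') *
        (((raa i).right i' * (rbb j).right j') *
          (SH K H (rb.right j) * SH K H (ra.right i))) with hT
  have wayB : T = SH K H b * SH K H a := by
    have inner : ∀ i ∈ ra.index, ∀ j ∈ rb.index,
        ∑ i' ∈ (raa i).index, ∑ j' ∈ (rbb j).index,
          SH K H ((raa i).left i' * (rbb j).left j') *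
            (((raa i).right i' * (rbb j).right j') *
              (SH K H (rb.right j) * SH K H (ra.right i)))
        = (εH K H (ra.left i) * εH K H (rb.left j)) •
            (SH K H (rb.right j) * SH K H (ra.right i)) := by
      intro i _ j _
      have e1 : ∑ i' ∈ (raa i).index, ∑ j' ∈ (rbb j).index,
          ((raa i).left i' * (rbb j).left j') ⊗ₜ[K]
            ((raa i).right i' * (rbb j).right j')
          = ΔH K H (ra.left i * rb.left j) := by
        have e0 : ΔH K H (ra.left i * rb.left j)
            = (∑ i' ∈ (raa i).index, (raa i).left i' ⊗ₜ[K] (raa i).right i') *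
              (∑ j' ∈ (rbb j).index, (rbb j).left j' ⊗ₜ[K] (rbb j).right j') := by
          rw [(raa i).eq, (rbb j).eq]; simp [ΔH]
        rw [e0, Finset.sum_mul_sum]
        exact Finset.sum_congr rfl fun _ _ => Finset.sum_congr rfl fun _ _ =>
          (Algebra.TensorProduct.tmul_mul_tmul _ _ _ _).symm
      have e2 := congrArg (Th K H) e1
      rw [Th_comul, map_sum] at e2
      simp only [map_sum, Th_tmul] at e2
      have key : ∑ i' ∈ (raa i).index, ∑ j' ∈ (rbb j).index,
          SH K H ((raa i).left i' * (rbb j).left j') *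
            ((raa i).right i' * (rbb j).right j')
          = algebraMap K H (εH K H (ra.left i) * εH K H (rb.left j)) := by
        rw [e2]; congr 1; simp [εH]
      calc ∑ i' ∈ (raa i).index, ∑ j' ∈ (rbb j).index,
            SH K H ((raa i).left i' * (rbb j).left j') *
              (((raa i).right i' * (rbb j).right j') *
                (SH K H (rb.right j) * SH K H (ra.right i)))
          = (∑ i' ∈ (raa i).index, ∑ j' ∈ (rbb j).index,
              SH K H ((raa i).left i' * (rbb j).left j') *
                ((raa i).right i' * (rbb j).right j')) *
              (SH K H (rb.right j) * SH K H (ra.right i)) := by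
            rw [Finset.sum_mul]
            refine Finset.sum_congr rfl fun i' _ => ?_
            rw [Finset.sum_mul]
            exact Finset.sum_congr rfl fun j' _ => (mul_assoc _ _ _).symm
        _ = _ := by rw [key, algebraMap_mul'']
    calc T = ∑ i ∈ ra.index, ∑ j ∈ rb.index,
          (εH K H (ra.left i) * εH K H (rb.left j)) •
            (SH K H (rb.right j) * SH K H (ra.right i)) := by
          rw [hT]
          refine Finset.sum_congr rfl fun i hi => ?_
          rw [Finset.sum_comm]
          exact Finset.sum_congr rfl fun j hj => inner i hi j hj
      _ = ∑ i ∈ ra.index, ∑ j ∈ rb.index,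
            (εH K H (rb.left j) • SH K H (rb.right j)) *
              (εH K H (ra.left i) • SH K H (ra.right i)) := by
          refine Finset.sum_congr rfl fun i _ => Finset.sum_congr rfl fun j _ => ?_
          rw [smul_mul_smul_comm, mul_comm (εH K H (rb.left j)) (εH K H (ra.left i))]
      _ = ∑ j ∈ rb.index, ∑ i ∈ ra.index,
            (εH K H (rb.left j) • SH K H (rb.right j)) *
              (εH K H (ra.left i) • SH K H (ra.right i)) := Finset.sum_comm
      _ = (∑ j ∈ rb.index, εH K H (rb.left j) • SH K H (rb.right j)) *
            (∑ i ∈ ra.index, εH K H (ra.left i) • SH K H (ra.right i)) :=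
          (Finset.sum_mul_sum _ _ _ _).symm
      _ = SH K H b * SH K H a := by
          have hb : ∑ j ∈ rb.index, εH K H (rb.left j) • SH K H (rb.right j)
              = SH K H b := by
            simpa [map_sum] using congrArg (SH K H) (sum_eps_left rb)
          have ha : ∑ i ∈ ra.index, εH K H (ra.left i) • SH K H (ra.right i)
              = SH K H a := by
            simpa [map_sum] using congrArg (SH K H) (sum_eps_left ra)
          rw [ha, hb]
  have wayA : T = SH K H (a * b) := by
    have stepA1 : T = ∑ i ∈ ra.index, ∑ i' ∈ (raa i).index,
        SH K H ((raa i).left i' * b) *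
          ((raa i).right i' * SH K H (ra.right i)) := by
      rw [hT]
      refine Finset.sum_congr rfl fun i _ => Finset.sum_congr rfl fun i' _ => ?_
      have hco := coassoc3 (SH K H ∘ₗ LinearMap.mulLeft K ((raa i).left i'))
        (LinearMap.mulLeft K ((raa i).right i'))
        (LinearMap.mulRight K (SH K H (ra.right i)) ∘ₗ SH K H) rb rbb rbb'
      simp only [LinearMap.comp_apply, LinearMap.mulLeft_apply,
        LinearMap.mulRight_apply] at hco
      rw [hco]
      have hterm : ∀ j ∈ rb.index, ∑ j' ∈ (rbb' j).index,
          SH K H ((raa i).left i' * rb.left j) *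
            (((raa i).right i' * (rbb' j).left j') *
              (SH K H ((rbb' j).right j') * SH K H (ra.right i)))
          = εH K H (rb.right j) •
              (SH K H ((raa i).left i' * rb.left j) *
                ((raa i).right i' * SH K H (ra.right i))) := by
        intro j _
        have hmid : ∑ j' ∈ (rbb' j).index,
            (rbb' j).left j' * SH K H ((rbb' j).right j')
            = algebraMap K H (εH K H (rb.right j)) := sum_mul_S (rbb' j)
        calc ∑ j' ∈ (rbb' j).index,
              SH K H ((raa i).left i' * rb.left j) *
                (((raa i).right i' * (rbb' j).left j') *
                  (SH K H ((rbb' j).right j') * SH K H (ra.right i)))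
            = SH K H ((raa i).left i' * rb.left j) *
                (((raa i).right i' *
                  (∑ j' ∈ (rbb' j).index,
                    (rbb' j).left j' * SH K H ((rbb' j).right j'))) *
                  SH K H (ra.right i)) := by
              rw [Finset.mul_sum, Finset.sum_mul, Finset.mul_sum]
              exact Finset.sum_congr rfl fun j' _ => by noncomm_ring
          _ = _ := by
              rw [hmid, mul_algebraMap'']
              rw [smul_mul_assoc, mul_smul_comm]
      rw [Finset.sum_congr rfl hterm]
      have : ∑ j ∈ rb.index, εH K H (rb.right j) •
          (SH K H ((raa i).left i' * rb.left j) *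
            ((raa i).right i' * SH K H (ra.right i)))
          = (∑ j ∈ rb.index, εH K H (rb.right j) •
              SH K H ((raa i).left i' * rb.left j)) *
            ((raa i).right i' * SH K H (ra.right i)) := by
        rw [Finset.sum_mul]
        exact Finset.sum_congr rfl fun j _ => (smul_mul_assoc _ _ _).symm
      rw [this, smul_S_mulLeft_sum _ rb]
    rw [stepA1]
    have hco := coassoc3 (SH K H ∘ₗ LinearMap.mulRight K b)
      (LinearMap.id (R := K) (M := H)) (SH K H) ra raa raa'
    simp only [LinearMap.comp_apply, LinearMap.mulRight_apply, LinearMap.id_apply] at hco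
    rw [hco]
    have stepA2 : ∀ i ∈ ra.index, ∑ j' ∈ (raa' i).index,
        SH K H (ra.left i * b) *
          ((raa' i).left j' * SH K H ((raa' i).right j'))
        = εH K H (ra.right i) • SH K H (ra.left i * b) := by
      intro i _
      rw [← Finset.mul_sum, sum_mul_S (raa' i), mul_algebraMap'']
    rw [Finset.sum_congr rfl stepA2, smul_S_mulRight_sum b ra]
  rw [← wayA, wayB]

end Antimult
section TwistAlg

variable {K H}

lemma one_A2 : (1 : H ⊗[K] H) = (1:H) ⊗ₜ[K] (1:H) := Algebra.TensorProduct.one_def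

lemma one_A3 : (1 : H ⊗[K] (H ⊗[K] H)) = (1:H) ⊗ₜ[K] ((1:H) ⊗ₜ[K] (1:H)) := by
  rw [Algebra.TensorProduct.one_def, Algebra.TensorProduct.one_def]

lemma ins1_apply (x : H ⊗[K] H) : ins1 K H x = 1 ⊗ₜ[K] x := rfl

lemma ins1_mul (x y : H ⊗[K] H) : ins1 K H (x * y) = ins1 K H x * ins1 K H y := by
  simp [ins1_apply, Algebra.TensorProduct.tmul_mul_tmul]

lemma ins1_one : ins1 K H (1 : H ⊗[K] H) = 1 := by
  rw [ins1_apply, one_A3, one_A2]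

@[simp] lemma ins3_tmul (a b : H) : ins3 K H (a ⊗ₜ[K] b) = a ⊗ₜ[K] (b ⊗ₜ[K] (1:H)) := rfl

lemma ins3_mul (x y : H ⊗[K] H) : ins3 K H (x * y) = ins3 K H x * ins3 K H y := by
  induction x using TensorProduct.induction_on with
  | zero => simp
  | tmul a b =>
    induction y using TensorProduct.induction_on with
    | zero => simp
    | tmul c d => simp [Algebra.TensorProduct.tmul_mul_tmul]
    | add u v hu hv => simp [mul_add, hu, hv]
  | add u v hu hv => simp [add_mul, hu, hv]

lemma ins3_one : ins3 K H (1 : H ⊗[K] H) = 1 := by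
  rw [one_A2, ins3_tmul, one_A3]

@[simp] lemma comulRight_tmul (a b : H) :
    comulRight K H (a ⊗ₜ[K] b) = a ⊗ₜ[K] (ΔH K H b) := rfl

lemma comulRight_mul (x y : H ⊗[K] H) :
    comulRight K H (x * y) = comulRight K H x * comulRight K H y := by
  induction x using TensorProduct.induction_on with
  | zero => simp
  | tmul a b =>
    induction y using TensorProduct.induction_on with
    | zero => simp
    | tmul c d => simp [Algebra.TensorProduct.tmul_mul_tmul, ΔH]
    | add u v hu hv => simp [mul_add, hu, hv]
  | add u v hu hv => simp [add_mul, hu, hv]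

lemma comulRight_one : comulRight K H (1 : H ⊗[K] H) = 1 := by
  rw [one_A2, comulRight_tmul, show ΔH K H 1 = 1 by simp [ΔH], one_A3, one_A2]

@[simp] lemma comulLeft_tmul (a b : H) :
    comulLeft K H (a ⊗ₜ[K] b) = (TensorProduct.assoc K H H H) ((ΔH K H a) ⊗ₜ[K] b) := rfl

set_option synthInstance.maxHeartbeats 400000 in
lemma assoc_mul_tmul (P Q : (H ⊗[K] H)) (b d : H) :
    (TensorProduct.assoc K H H H) ((P * Q) ⊗ₜ[K] (b * d))
      = (TensorProduct.assoc K H H H) (P ⊗ₜ[K] b) *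
        (TensorProduct.assoc K H H H) (Q ⊗ₜ[K] d) := by
  induction P using TensorProduct.induction_on with
  | zero => simp
  | tmul p q =>
    induction Q using TensorProduct.induction_on with
    | zero => simp
    | tmul u v => simp [Algebra.TensorProduct.tmul_mul_tmul]
    | add u v hu hv => simp [mul_add, add_tmul, hu, hv]
  | add u v hu hv => simp [add_mul, add_tmul, hu, hv]

lemma comulLeft_mul (x y : H ⊗[K] H) :
    comulLeft K H (x * y) = comulLeft K H x * comulLeft K H y := by
  induction x using TensorProduct.induction_on with
  | zero => simp
  | tmul a b =>
    induction y using TensorProduct.induction_on with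
    | zero => simp
    | tmul c d =>
      simp only [Algebra.TensorProduct.tmul_mul_tmul, comulLeft_tmul]
      rw [show ΔH K H (a * c) = ΔH K H a * ΔH K H c by simp [ΔH], assoc_mul_tmul]
    | add u v hu hv => simp [mul_add, hu, hv]
  | add u v hu hv => simp [add_mul, hu, hv]

lemma comulLeft_one : comulLeft K H (1 : H ⊗[K] H) = 1 := by
  rw [one_A2, comulLeft_tmul, show ΔH K H 1 = 1 by simp [ΔH], one_A2, one_A3]
  simp

@[simp] lemma counitLeft_tmul (a b : H) :
    counitLeft K H (a ⊗ₜ[K] b) = εH K H a • b := rfl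

@[simp] lemma counitRight_tmul (a b : H) :
    counitRight K H (a ⊗ₜ[K] b) = εH K H b • a := rfl

lemma counitLeft_mul (x y : H ⊗[K] H) :
    counitLeft K H (x * y) = counitLeft K H x * counitLeft K H y := by
  induction x using TensorProduct.induction_on with
  | zero => simp
  | tmul a b =>
    induction y using TensorProduct.induction_on with
    | zero => simp
    | tmul c d =>
      simp only [Algebra.TensorProduct.tmul_mul_tmul, counitLeft_tmul]
      rw [show εH K H (a * c) = εH K H a * εH K H c by simp [εH], smul_mul_smul_comm]
    | add u v hu hv => simp [mul_add, hu, hv]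
  | add u v hu hv => simp [add_mul, hu, hv]

lemma counitRight_mul (x y : H ⊗[K] H) :
    counitRight K H (x * y) = counitRight K H x * counitRight K H y := by
  induction x using TensorProduct.induction_on with
  | zero => simp
  | tmul a b =>
    induction y using TensorProduct.induction_on with
    | zero => simp
    | tmul c d =>
      simp only [Algebra.TensorProduct.tmul_mul_tmul, counitRight_tmul]
      rw [show εH K H (b * d) = εH K H b * εH K H d by simp [εH], smul_mul_smul_comm]
    | add u v hu hv => simp [mul_add, hu, hv]
  | add u v hu hv => simp [add_mul, hu, hv]

lemma counitLeft_one : counitLeft K H (1 : H ⊗[K] H) = 1 := by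
  rw [one_A2, counitLeft_tmul]
  rw [show εH K H 1 = 1 by simp [εH], one_smul]

lemma counitRight_one : counitRight K H (1 : H ⊗[K] H) = 1 := by
  rw [one_A2, counitRight_tmul]
  rw [show εH K H 1 = 1 by simp [εH], one_smul]

/-- Monoid lemma used to invert the cocycle condition. -/
lemma inv_swap {Mo : Type*} [Monoid Mo] {A B C D A' B' C' D' : Mo}
    (h : A * B = C * D) (hA' : A' * A = 1) (hB : B * B' = 1) (hB' : B' * B = 1)
    (hC : C * C' = 1) (hD : D * D' = 1) :
    B' * A' = D' * C' := by
  have h1 : (B' * A') * (A * B) = 1 := by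
    rw [mul_assoc, ← mul_assoc A', hA', one_mul, hB']
  have h2 : (C * D) * (D' * C') = 1 := by
    rw [mul_assoc, ← mul_assoc D, hD, one_mul, hC]
  calc B' * A' = (B' * A') * ((C * D) * (D' * C')) := by rw [h2, mul_one]
    _ = ((B' * A') * (A * B)) * (D' * C') := by rw [← h, ← mul_assoc]
    _ = D' * C' := by rw [h1, one_mul]

variable {F Finv : H ⊗[K] H}

lemma counitLeft_Finv (hF : IsTwist K H F Finv) : counitLeft K H Finv = 1 := by
  have h1 : counitLeft K H F * counitLeft K H Finv = 1 := by
    rw [← counitLeft_mul, hF.mul_inv, counitLeft_one]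
  rwa [hF.counit_left, one_mul] at h1

lemma counitRight_Finv (hF : IsTwist K H F Finv) : counitRight K H Finv = 1 := by
  have h1 : counitRight K H F * counitRight K H Finv = 1 := by
    rw [← counitRight_mul, hF.mul_inv, counitRight_one]
  rwa [hF.counit_right, one_mul] at h1

lemma invCo (hF : IsTwist K H F Finv) :
    comulLeft K H Finv * ins3 K H Finv = comulRight K H Finv * ins1 K H Finv := by
  refine inv_swap hF.cocycle ?_ ?_ ?_ ?_ ?_
  · rw [← ins3_mul, hF.inv_mul, ins3_one]
  · rw [← comulLeft_mul, hF.mul_inv, comulLeft_one]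
  · rw [← comulLeft_mul, hF.inv_mul, comulLeft_one]
  · rw [← ins1_mul, hF.mul_inv, ins1_one]
  · rw [← comulRight_mul, hF.mul_inv, comulRight_one]

lemma comulLeft_Finv_eq (hF : IsTwist K H F Finv) :
    comulLeft K H Finv = comulRight K H Finv * (ins1 K H Finv * ins3 K H F) := by
  have h := congrArg (· * ins3 K H F) (invCo hF)
  simp only [mul_assoc] at h
  rwa [show ins3 K H Finv * ins3 K H F = 1 by rw [← ins3_mul, hF.inv_mul, ins3_one],
    mul_one] at h

lemma comulRight_Finv_eq (hF : IsTwist K H F Finv) :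
    comulRight K H Finv = comulLeft K H Finv * (ins3 K H Finv * ins1 K H F) := by
  have h := congrArg (· * ins1 K H F) (invCo hF).symm
  simp only [mul_assoc] at h
  rwa [show ins1 K H Finv * ins1 K H F = 1 by rw [← ins1_mul, hF.inv_mul, ins1_one],
    mul_one] at h

end TwistAlg
section ThetaLayer

/-- collapse map on the middle-right pair: `a ⊗ (b ⊗ c) ↦ a ⊗ S(b) c`. -/
def ThM : H ⊗[K] (H ⊗[K] H) →ₗ[K] H ⊗[K] H := LinearMap.lTensor H (Th K H)

/-- collapse map on the left pair: `a ⊗ (b ⊗ c) ↦ S(a) b ⊗ c`. -/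
def ThM' : H ⊗[K] (H ⊗[K] H) →ₗ[K] H ⊗[K] H :=
  (Th K H).rTensor H ∘ₗ (TensorProduct.assoc K H H H).symm.toLinearMap

variable {K H}

@[simp] lemma ThM_tmul (a : H) (B : H ⊗[K] H) : ThM K H (a ⊗ₜ[K] B) = a ⊗ₜ[K] Th K H B :=
  rfl

@[simp] lemma ThM'_tmul (a b c : H) :
    ThM' K H (a ⊗ₜ[K] (b ⊗ₜ[K] c)) = (SH K H a * b) ⊗ₜ[K] c := by
  simp [ThM', TensorProduct.assoc_symm_tmul]

lemma mul_tmul_eq (z : H ⊗[K] H) (c d : H) :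
    z * (c ⊗ₜ[K] d)
      = TensorProduct.map (LinearMap.mulRight K c) (LinearMap.mulRight K d) z := by
  induction z using TensorProduct.induction_on with
  | zero => simp
  | tmul p q => simp [Algebra.TensorProduct.tmul_mul_tmul]
  | add u v hu hv => simp [add_mul, hu, hv]

lemma mulA3 (e : H ⊗[K] (H ⊗[K] H)) (c q r : H) :
    e * (c ⊗ₜ[K] (q ⊗ₜ[K] r))
      = TensorProduct.map (LinearMap.mulRight K c)
          (TensorProduct.map (LinearMap.mulRight K q) (LinearMap.mulRight K r)) e := by
  induction e using TensorProduct.induction_on with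
  | zero => simp
  | tmul a B =>
    induction B using TensorProduct.induction_on with
    | zero => simp
    | tmul x y => simp [Algebra.TensorProduct.tmul_mul_tmul]
    | add u v hu hv => simp only [TensorProduct.tmul_add, add_mul, hu, hv, map_add]
  | add u v hu hv => simp [add_mul, hu, hv]

lemma mulRight_add' (a b : H) :
    LinearMap.mulRight K (a + b) = LinearMap.mulRight K a + LinearMap.mulRight K b := by
  ext z; simp [mul_add]

lemma mulLeft_add' (a b : H) :
    LinearMap.mulLeft K (a + b) = LinearMap.mulLeft K a + LinearMap.mulLeft K b := by
  ext z; simp [add_mul]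

lemma Th_map_mR (c d : H) (z : H ⊗[K] H) :
    Th K H (TensorProduct.map (LinearMap.mulRight K c) (LinearMap.mulRight K d) z)
      = SH K H c * (Th K H z * d) := by
  induction z using TensorProduct.induction_on with
  | zero => simp
  | tmul p q =>
    simp only [TensorProduct.map_tmul, Th_tmul, LinearMap.mulRight_apply]
    rw [S_mul]; noncomm_ring
  | add u v hu hv => simp [hu, hv, mul_add, add_mul]

/-- Key collapse: `Θ(Δ(u) w) = ε(u) Θ(w)`. -/
lemma Th_comul_mul (u : H) (w : H ⊗[K] H) :
    Th K H (ΔH K H u * w) = εH K H u • Th K H w := by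
  induction w using TensorProduct.induction_on with
  | zero => simp
  | tmul c d =>
    rw [mul_tmul_eq, Th_map_mR, Th_comul, algebraMap_mul'', Th_tmul, mul_smul_comm]
  | add u' v hu hv => simp [mul_add, hu, hv]

lemma ThM_comulRight_mul (x : H ⊗[K] H) (w : H ⊗[K] (H ⊗[K] H)) :
    ThM K H (comulRight K H x * w)
      = (counitRight K H x ⊗ₜ[K] (1:H)) * ThM K H w := by
  induction x using TensorProduct.induction_on with
  | zero => simp
  | tmul u v =>
    induction w using TensorProduct.induction_on with
    | zero => simp
    | tmul c B =>
      rw [comulRight_tmul, Algebra.TensorProduct.tmul_mul_tmul, ThM_tmul,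
        Th_comul_mul, counitRight_tmul, ThM_tmul, Algebra.TensorProduct.tmul_mul_tmul]
      rw [TensorProduct.tmul_smul, smul_mul_assoc, one_mul]
      rw [TensorProduct.smul_tmul']
    | add u' v' hu hv => rw [mul_add, map_add, hu, hv, map_add, mul_add]
  | add u' v' hu hv =>
      rw [map_add, add_mul, map_add, hu, hv, map_add, TensorProduct.add_tmul, add_mul]

lemma ThM_ins1_ins3 (y z : H ⊗[K] H) :
    ThM K H (ins1 K H y * ins3 K H z)
      = LinearMap.lTensor H (LinearMap.mulRight K (Th K H y) ∘ₗ SH K H) z := by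
  induction y using TensorProduct.induction_on with
  | zero => simp [ins1_apply]
  | tmul c d =>
    induction z using TensorProduct.induction_on with
    | zero => simp
    | tmul e g =>
      rw [ins1_apply, ins3_tmul, Algebra.TensorProduct.tmul_mul_tmul, one_mul,
        Algebra.TensorProduct.tmul_mul_tmul, mul_one, ThM_tmul]
      simp only [LinearMap.lTensor_tmul, LinearMap.comp_apply, LinearMap.mulRight_apply,
        Th_tmul]
      congr 1
      rw [S_mul]; noncomm_ring
    | add u v hu hv => rw [map_add (ins3 K H), mul_add, map_add, hu, hv, ← map_add]
  | add u v hu hv =>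
    rw [map_add, add_mul, map_add, hu, hv, map_add, mulRight_add', LinearMap.add_comp,
      LinearMap.lTensor_add, LinearMap.add_apply]

variable {F Finv : H ⊗[K] H}

lemma Th_Finv_eq : Th K H Finv = chiInv K H Finv := rfl

lemma Ps_F_eq : Ps K H F = chi K H F := rfl

/-- Identity (KI): `Θ(comulLeft F⁻¹) = Σ f¹ ⊗ S(f²) χ⁻¹`. -/
lemma theta0_eq (hF : IsTwist K H F Finv) :
    ThM K H (comulLeft K H Finv)
      = LinearMap.lTensor H
          (LinearMap.mulRight K (chiInv K H Finv) ∘ₗ SH K H) F := by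
  rw [comulLeft_Finv_eq hF, ThM_comulRight_mul, counitRight_Finv hF,
    ThM_ins1_ins3, Th_Finv_eq, ← one_A2, one_mul]

end ThetaLayer
section ChiLayer

variable {K H}

lemma muH_lT_mRS (c : H) (x : H ⊗[K] H) :
    muH K H (LinearMap.lTensor H (LinearMap.mulRight K c ∘ₗ SH K H) x)
      = Ps K H x * c := by
  induction x using TensorProduct.induction_on with
  | zero => simp
  | tmul a b => simp [mul_assoc]
  | add u v hu hv => simp [hu, hv, add_mul]

set_option synthInstance.maxHeartbeats 400000 in
lemma muH_ThM_assoc (p : H ⊗[K] H) (v : H) :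
    muH K H (ThM K H ((TensorProduct.assoc K H H H) (p ⊗ₜ[K] v)))
      = Ps K H p * v := by
  induction p using TensorProduct.induction_on with
  | zero => simp
  | tmul x y => simp [mul_assoc]
  | add u w hu hw => simp [TensorProduct.add_tmul, hu, hw, add_mul]

lemma muH_ThM_comulLeft (x : H ⊗[K] H) :
    muH K H (ThM K H (comulLeft K H x)) = counitLeft K H x := by
  induction x using TensorProduct.induction_on with
  | zero => simp
  | tmul u v =>
    rw [comulLeft_tmul, muH_ThM_assoc, show Ps K H (ΔH K H u) = algebraMap K H (εH K H u)
      from Ps_comul u, algebraMap_mul'', counitLeft_tmul]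
  | add u v hu hv => simp [hu, hv]

variable {F Finv : H ⊗[K] H}

lemma chi_chiInv (hF : IsTwist K H F Finv) :
    chi K H F * chiInv K H Finv = 1 := by
  have h := congrArg (muH K H) (theta0_eq hF)
  rw [muH_ThM_comulLeft, counitLeft_Finv hF, muH_lT_mRS, Ps_F_eq] at h
  exact h.symm

/- KIR side -/

set_option synthInstance.maxHeartbeats 400000 in
lemma ThM'_map_par (c q r b : H) (p : H ⊗[K] H) :
    ThM' K H (TensorProduct.map (LinearMap.mulRight K c)
        (TensorProduct.map (LinearMap.mulRight K q) (LinearMap.mulRight K r))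
        ((TensorProduct.assoc K H H H) (p ⊗ₜ[K] b)))
      = Th K H (p * (c ⊗ₜ[K] q)) ⊗ₜ[K] (b * r) := by
  induction p using TensorProduct.induction_on with
  | zero => simp
  | tmul x y => simp [Algebra.TensorProduct.tmul_mul_tmul]
  | add u v hu hv => simp [TensorProduct.add_tmul, add_mul, hu, hv]

lemma ThM'_comulLeft_mul (x : H ⊗[K] H) (w : H ⊗[K] (H ⊗[K] H)) :
    ThM' K H (comulLeft K H x * w)
      = ((1:H) ⊗ₜ[K] counitLeft K H x) * ThM' K H w := by
  induction x using TensorProduct.induction_on with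
  | zero => simp
  | tmul a b =>
    induction w using TensorProduct.induction_on with
    | zero => simp
    | tmul c B =>
      induction B using TensorProduct.induction_on with
      | zero => simp
      | tmul q r =>
        rw [comulLeft_tmul, mulA3, ThM'_map_par, Th_comul_mul, counitLeft_tmul,
          ThM'_tmul, Algebra.TensorProduct.tmul_mul_tmul, one_mul, Th_tmul]
        rw [TensorProduct.smul_tmul, smul_mul_assoc]
      | add u v hu hv =>
          rw [TensorProduct.tmul_add, mul_add, map_add, hu, hv, map_add, mul_add]
    | add u v hu hv => rw [mul_add, map_add, hu, hv, map_add, mul_add]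
  | add u v hu hv =>
      rw [map_add, add_mul, map_add, hu, hv, map_add, TensorProduct.tmul_add, add_mul]

lemma ThM'_ins3_ins1 (y z : H ⊗[K] H) :
    ThM' K H (ins3 K H y * ins1 K H z)
      = LinearMap.rTensor H (LinearMap.mulLeft K (Th K H y)) z := by
  induction y using TensorProduct.induction_on with
  | zero => simp [ins1_apply]
  | tmul c d =>
    induction z using TensorProduct.induction_on with
    | zero => simp
    | tmul e g =>
      rw [ins3_tmul, ins1_apply, Algebra.TensorProduct.tmul_mul_tmul, mul_one,
        Algebra.TensorProduct.tmul_mul_tmul, one_mul, ThM'_tmul]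
      simp only [LinearMap.rTensor_tmul, LinearMap.mulLeft_apply, Th_tmul]
      congr 1
      rw [mul_assoc]
    | add u v hu hv => rw [map_add (ins1 K H), mul_add, map_add, hu, hv, ← map_add]
  | add u v hu hv =>
    rw [map_add (ins3 K H), add_mul, map_add, hu, hv, map_add, mulLeft_add',
      LinearMap.rTensor_add, LinearMap.add_apply]

lemma thetaR_eq (hF : IsTwist K H F Finv) :
    ThM' K H (comulRight K H Finv)
      = LinearMap.rTensor H (LinearMap.mulLeft K (chiInv K H Finv)) F := by
  rw [comulRight_Finv_eq hF, ThM'_comulLeft_mul, counitLeft_Finv hF,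
    ThM'_ins3_ins1, Th_Finv_eq, ← one_A2, one_mul]

lemma Ps_ThM'_tmul (u : H) (q : H ⊗[K] H) :
    Ps K H (ThM' K H (u ⊗ₜ[K] q)) = SH K H u * Ps K H q := by
  induction q using TensorProduct.induction_on with
  | zero => simp
  | tmul b c => simp [mul_assoc]
  | add x y hx hy => rw [TensorProduct.tmul_add, map_add, map_add, hx, hy, map_add, mul_add]

lemma Ps_ThM'_comulRight (x : H ⊗[K] H) :
    Ps K H (ThM' K H (comulRight K H x)) = SH K H (counitRight K H x) := by
  induction x using TensorProduct.induction_on with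
  | zero => simp
  | tmul u v =>
    rw [comulRight_tmul, Ps_ThM'_tmul, Ps_comul, mul_algebraMap'', counitRight_tmul,
      map_smul]
  | add u v hu hv => simp [hu, hv]

lemma Ps_rT_mL (c : H) (z : H ⊗[K] H) :
    Ps K H (LinearMap.rTensor H (LinearMap.mulLeft K c) z) = c * Ps K H z := by
  induction z using TensorProduct.induction_on with
  | zero => simp
  | tmul e g => simp [mul_assoc]
  | add u v hu hv => simp [hu, hv, mul_add]

lemma chiInv_chi (hF : IsTwist K H F Finv) :
    chiInv K H Finv * chi K H F = 1 := by
  have h := congrArg (Ps K H) (thetaR_eq hF)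
  rw [Ps_ThM'_comulRight, counitRight_Finv hF, S_one, Ps_rT_mL, Ps_F_eq] at h
  exact h.symm

end ChiLayer
section DiaLayer

/-- `dia (a ⊗ b) y = (a ⊗ 1) * y * (1 ⊗ b)`, the product of `H ⊗ H^op`. -/
def dia : (H ⊗[K] H) →ₗ[K] (H ⊗[K] H) →ₗ[K] (H ⊗[K] H) :=
  TensorProduct.lift <| LinearMap.mk₂ K
    (fun a b => LinearMap.mulLeft K (a ⊗ₜ[K] (1:H)) ∘ₗ LinearMap.mulRight K ((1:H) ⊗ₜ[K] b))
    (fun a a' b => by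
      ext z
      simp [TensorProduct.add_tmul, add_mul])
    (fun c a b => by
      ext z
      simp [TensorProduct.smul_tmul', smul_mul_assoc])
    (fun a b b' => by
      ext z
      simp [TensorProduct.tmul_add, mul_add])
    (fun c a b => by
      ext z
      simp [TensorProduct.tmul_smul, mul_smul_comm])

variable {K H}

@[simp] lemma dia_tmul (a b c d : H) :
    dia K H (a ⊗ₜ[K] b) (c ⊗ₜ[K] d) = (a * c) ⊗ₜ[K] (d * b) := by
  simp [dia, Algebra.TensorProduct.tmul_mul_tmul]

lemma diaS1 (p q : H) (x y : H ⊗[K] H) :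
    dia K H (LinearMap.lTensor H (LinearMap.mulRight K p ∘ₗ SH K H) x)
        (LinearMap.lTensor H (LinearMap.mulLeft K q ∘ₗ SH K H) y)
      = LinearMap.lTensor H
          (LinearMap.mulLeft K q ∘ₗ LinearMap.mulRight K p ∘ₗ SH K H) (x * y) := by
  induction x using TensorProduct.induction_on with
  | zero => simp
  | tmul u v =>
    induction y using TensorProduct.induction_on with
    | zero => simp
    | tmul c d =>
      simp only [LinearMap.lTensor_tmul, LinearMap.comp_apply, LinearMap.mulRight_apply,
        LinearMap.mulLeft_apply, dia_tmul, Algebra.TensorProduct.tmul_mul_tmul]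
      congr 1
      rw [S_mul]; noncomm_ring
    | add u' v' hu hv =>
      simp only [map_add, LinearMap.add_apply, mul_add, hu, hv]
  | add u' v' hu hv =>
    simp only [map_add, LinearMap.add_apply, add_mul, hu, hv]

lemma diaS2 (p q : H) (h : p * q = 1) (x y : H ⊗[K] H) :
    dia K H (LinearMap.lTensor H (LinearMap.mulLeft K q ∘ₗ SH K H) x)
        (LinearMap.lTensor H (LinearMap.mulRight K p ∘ₗ SH K H) y)
      = LinearMap.lTensor H (SH K H) (x * y) := by
  induction x using TensorProduct.induction_on with
  | zero => simp
  | tmul u v =>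
    induction y using TensorProduct.induction_on with
    | zero => simp
    | tmul c d =>
      simp only [LinearMap.lTensor_tmul, LinearMap.comp_apply, LinearMap.mulRight_apply,
        LinearMap.mulLeft_apply, dia_tmul, Algebra.TensorProduct.tmul_mul_tmul]
      congr 1
      rw [S_mul, mul_assoc, ← mul_assoc p q, h, one_mul]
    | add u' v' hu hv =>
      simp only [map_add, LinearMap.add_apply, mul_add, hu, hv]
  | add u' v' hu hv =>
    simp only [map_add, LinearMap.add_apply, add_mul, hu, hv]

lemma diaS0 (x y : H ⊗[K] H) :
    dia K H (LinearMap.lTensor H (SH K H) x) (LinearMap.lTensor H (SH K H) y)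
      = LinearMap.lTensor H (SH K H) (x * y) := by
  induction x using TensorProduct.induction_on with
  | zero => simp
  | tmul u v =>
    induction y using TensorProduct.induction_on with
    | zero => simp
    | tmul c d =>
      simp only [LinearMap.lTensor_tmul, dia_tmul, Algebra.TensorProduct.tmul_mul_tmul]
      rw [← S_mul]
    | add u' v' hu hv =>
      simp only [map_add, LinearMap.add_apply, mul_add, hu, hv]
  | add u' v' hu hv =>
    simp only [map_add, LinearMap.add_apply, add_mul, hu, hv]

variable {F Finv : H ⊗[K] H}

lemma dia_t_t' (hF : IsTwist K H F Finv) :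
    dia K H (ThM K H (comulLeft K H Finv))
        (LinearMap.lTensor H (LinearMap.mulLeft K (chi K H F) ∘ₗ SH K H) Finv)
      = 1 := by
  rw [theta0_eq hF, diaS1, hF.mul_inv, one_A2]
  simp only [LinearMap.lTensor_tmul, LinearMap.comp_apply, LinearMap.mulRight_apply,
    LinearMap.mulLeft_apply, S_one, one_mul, chi_chiInv hF]

lemma dia_t'_t (hF : IsTwist K H F Finv) :
    dia K H (LinearMap.lTensor H (LinearMap.mulLeft K (chi K H F) ∘ₗ SH K H) Finv)
        (ThM K H (comulLeft K H Finv))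
      = 1 := by
  rw [theta0_eq hF, diaS2 _ _ (chiInv_chi hF), hF.inv_mul, one_A2]
  simp only [LinearMap.lTensor_tmul, S_one]

end DiaLayer
section PsiLayer

/-- `β(ξ) = ξ₁ ⊗ S(ξ₂)`. -/
def betaH : H →ₗ[K] H ⊗[K] H := LinearMap.lTensor H (SH K H) ∘ₗ ΔH K H

/-- `J((a ⊗ b) ⊗ (c ⊗ d)) = a ⊗ (bc ⊗ d)`. -/
def Jm : (H ⊗[K] H) ⊗[K] (H ⊗[K] H) →ₗ[K] H ⊗[K] (H ⊗[K] H) :=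
  LinearMap.lTensor H
      ((muH K H).rTensor H ∘ₗ (TensorProduct.assoc K H H H).symm.toLinearMap)
    ∘ₗ (TensorProduct.assoc K H H (H ⊗[K] H)).toLinearMap

/-- `Ψ(u ⊗ v) = J(β(u) ⊗ β(v))`. -/
def PsiM : H ⊗[K] H →ₗ[K] H ⊗[K] (H ⊗[K] H) :=
  Jm K H ∘ₗ TensorProduct.map (betaH K H) (betaH K H)

/-- `h ↦ 1 ⊗ S h`. -/
def oneS : H →ₗ[K] H ⊗[K] H := TensorProduct.mk K H H 1 ∘ₗ SH K H

/-- `gadget (x ⊗ v) = S(x) v₁ ⊗ S(v₂)`. -/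
def gadget : H ⊗[K] H →ₗ[K] H ⊗[K] H :=
  TensorProduct.map (Th K H) (SH K H)
    ∘ₗ (TensorProduct.assoc K H H H).symm.toLinearMap
    ∘ₗ LinearMap.lTensor H (ΔH K H)

/-- `finalMul ((x ⊗ y) ⊗ e) = x ⊗ y e`. -/
def finalMul : (H ⊗[K] H) ⊗[K] H →ₗ[K] H ⊗[K] H :=
  LinearMap.lTensor H (muH K H) ∘ₗ (TensorProduct.assoc K H H H).toLinearMap

/-- `Ξ (a ⊗ (b ⊗ e)) = a₁ ⊗ (S(a₂) b₁ ⊗ S(b₂) e)`. -/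
def XiM : H ⊗[K] (H ⊗[K] H) →ₗ[K] H ⊗[K] (H ⊗[K] H) :=
  LinearMap.lTensor H (finalMul K H)
    ∘ₗ (TensorProduct.assoc K H (H ⊗[K] H) H).toLinearMap
    ∘ₗ (PsiM K H).rTensor H
    ∘ₗ (TensorProduct.assoc K H H H).symm.toLinearMap

/-- `θ_c = Θ ∘ comulLeft`,  `θ_c(x¹ ⊗ x²) = x¹₁ ⊗ S(x¹₂) x²`. -/
def thetac : H ⊗[K] H →ₗ[K] H ⊗[K] H := ThM K H ∘ₗ comulLeft K H

variable {K H}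

lemma betaH_apply (h : H) :
    betaH K H h = LinearMap.lTensor H (SH K H) (ΔH K H h) := rfl

lemma thetac_apply (x : H ⊗[K] H) : thetac K H x = ThM K H (comulLeft K H x) := rfl

@[simp] lemma Jm_tmul (a b c d : H) :
    Jm K H ((a ⊗ₜ[K] b) ⊗ₜ[K] (c ⊗ₜ[K] d)) = a ⊗ₜ[K] ((b * c) ⊗ₜ[K] d) := by
  simp [Jm, TensorProduct.assoc_symm_tmul]

lemma J_tmul_left (a b : H) (y : H ⊗[K] H) :
    Jm K H ((a ⊗ₜ[K] b) ⊗ₜ[K] y)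
      = a ⊗ₜ[K] (LinearMap.rTensor H (LinearMap.mulLeft K b) y) := by
  induction y using TensorProduct.induction_on with
  | zero => simp
  | tmul c d => simp
  | add u v hu hv => rw [TensorProduct.tmul_add, map_add, hu, hv, map_add,
      TensorProduct.tmul_add]

lemma J_last (x y : H ⊗[K] H) (e : H) :
    LinearMap.lTensor H (LinearMap.lTensor H (LinearMap.mulRight K e)) (Jm K H (x ⊗ₜ[K] y))
      = Jm K H (x ⊗ₜ[K] LinearMap.lTensor H (LinearMap.mulRight K e) y) := by
  induction x using TensorProduct.induction_on with
  | zero => simp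
  | tmul a b =>
    induction y using TensorProduct.induction_on with
    | zero => simp
    | tmul c d => simp [mul_assoc]
    | add u v hu hv => rw [TensorProduct.tmul_add, map_add, map_add, hu, hv, map_add,
        TensorProduct.tmul_add, map_add]
  | add u v hu hv => rw [TensorProduct.add_tmul, map_add, map_add, hu, hv,
      TensorProduct.add_tmul, map_add]

lemma one_tmul_mul (v : H) (y : H ⊗[K] H) :
    (v ⊗ₜ[K] (1:H)) * y = LinearMap.rTensor H (LinearMap.mulLeft K v) y := by
  induction y using TensorProduct.induction_on with
  | zero => simp
  | tmul c d => simp [Algebra.TensorProduct.tmul_mul_tmul]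
  | add u w hu hw => rw [mul_add, hu, hw, map_add]

lemma J_shift (v : H) (x y : H ⊗[K] H) :
    Jm K H (x ⊗ₜ[K] ((v ⊗ₜ[K] (1:H)) * y))
      = Jm K H ((LinearMap.lTensor H (LinearMap.mulRight K v) x) ⊗ₜ[K] y) := by
  rw [one_tmul_mul]
  induction x using TensorProduct.induction_on with
  | zero => simp
  | tmul a b =>
    induction y using TensorProduct.induction_on with
    | zero => simp
    | tmul c d => simp [mul_assoc]
    | add u w hu hw => rw [map_add, TensorProduct.tmul_add, map_add, hu, hw,
        TensorProduct.tmul_add, map_add]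
  | add u w hu hw => rw [TensorProduct.add_tmul, map_add, hu, hw, map_add,
      TensorProduct.add_tmul, map_add]

lemma J_deco (c d c' d' : H) (z : (H ⊗[K] H) ⊗[K] (H ⊗[K] H)) :
    Jm K H (TensorProduct.map
        (TensorProduct.map (LinearMap.mulRight K c) (LinearMap.mulLeft K d))
        (TensorProduct.map (LinearMap.mulRight K c') (LinearMap.mulLeft K d')) z)
      = TensorProduct.map (LinearMap.mulRight K c)
          (TensorProduct.map (LinearMap.mulLeft K d ∘ₗ LinearMap.mulRight K c')
            (LinearMap.mulLeft K d')) (Jm K H z) := by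
  induction z using TensorProduct.induction_on with
  | zero => simp
  | tmul x y =>
    induction x using TensorProduct.induction_on with
    | zero => simp
    | tmul a b =>
      induction y using TensorProduct.induction_on with
      | zero => simp
      | tmul e f => simp [mul_assoc]
      | add u v hu hv => simp only [TensorProduct.tmul_add, TensorProduct.add_tmul,
          map_add, hu, hv]
    | add u v hu hv => simp only [TensorProduct.tmul_add, TensorProduct.add_tmul,
        map_add, hu, hv]
  | add u v hu hv => simp only [map_add, hu, hv]

@[simp] lemma PsiM_tmul (u v : H) :
    PsiM K H (u ⊗ₜ[K] v) = Jm K H (betaH K H u ⊗ₜ[K] betaH K H v) := by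
  simp [PsiM]

set_option synthInstance.maxHeartbeats 400000 in
lemma gadget_par (x : H) (P : H ⊗[K] H) :
    TensorProduct.map (Th K H) (SH K H)
        ((TensorProduct.assoc K H H H).symm (x ⊗ₜ[K] P))
      = LinearMap.rTensor H (LinearMap.mulLeft K (SH K H x))
          (LinearMap.lTensor H (SH K H) P) := by
  induction P using TensorProduct.induction_on with
  | zero => simp
  | tmul v w => simp [TensorProduct.assoc_symm_tmul]
  | add u w hu hw => rw [TensorProduct.tmul_add, map_add, map_add, hu, hw, map_add,
      map_add]

lemma gadget_tmul (x v : H) :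
    gadget K H (x ⊗ₜ[K] v)
      = LinearMap.rTensor H (LinearMap.mulLeft K (SH K H x)) (betaH K H v) := by
  rw [gadget, LinearMap.comp_apply, LinearMap.comp_apply, LinearMap.lTensor_tmul,
    LinearEquiv.coe_coe, gadget_par, betaH_apply]

lemma counitLeft_comul (h : H) : counitLeft K H (ΔH K H h) = h := by
  simp [counitLeft, εH, ΔH, Coalgebra.rTensor_counit_comul]

lemma counitRight_comul (h : H) : counitRight K H (ΔH K H h) = h := by
  simp [counitRight, εH, ΔH, Coalgebra.lTensor_counit_comul]

lemma gadget_collapse (z : H ⊗[K] H) :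
    TensorProduct.map (Th K H) (SH K H) ((ΔH K H).rTensor H z)
      = (1:H) ⊗ₜ[K] SH K H (counitLeft K H z) := by
  induction z using TensorProduct.induction_on with
  | zero => simp
  | tmul u v =>
    simp only [LinearMap.rTensor_tmul, TensorProduct.map_tmul, Th_comul,
      counitLeft_tmul, map_smul]
    rw [Algebra.algebraMap_eq_smul_one, TensorProduct.smul_tmul]
  | add u w hu hw => simp [hu, hw, TensorProduct.tmul_add]

lemma gadget_comul_apply (h : H) : gadget K H (ΔH K H h) = (1:H) ⊗ₜ[K] SH K H h := by
  rw [gadget, LinearMap.comp_apply, LinearMap.comp_apply, LinearEquiv.coe_coe]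
  rw [show LinearMap.lTensor H (ΔH K H) (ΔH K H h)
      = (TensorProduct.assoc K H H H) ((ΔH K H).rTensor H (ΔH K H h)) from
    (Coalgebra.coassoc_apply h).symm]
  rw [LinearEquiv.symm_apply_apply, gadget_collapse, counitLeft_comul]

end PsiLayer
section PsiDeltaSec

variable {K H}

lemma oneS_apply (h : H) : oneS K H h = (1:H) ⊗ₜ[K] SH K H h := rfl

lemma PsiDelta (ξ : H) :
    PsiM K H (ΔH K H ξ) = LinearMap.lTensor H (oneS K H) (ΔH K H ξ) := by
  classical
  let r : Coalgebra.Repr K ξ (H × H) := ℛ K ξ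
  let r1 : ∀ i : r.ι, Coalgebra.Repr K (r.left i) (H × H) := fun i => ℛ K _
  let r2 : ∀ i : r.ι, Coalgebra.Repr K (r.right i) (H × H) := fun i => ℛ K _
  have hΔ : ΔH K H ξ = ∑ i ∈ r.index, r.left i ⊗ₜ[K] r.right i := r.eq.symm
  rw [PsiM, LinearMap.comp_apply, hΔ, map_sum, map_sum, map_sum]
  have step1 : ∀ i ∈ r.index,
      Jm K H (TensorProduct.map (betaH K H) (betaH K H) (r.left i ⊗ₜ[K] r.right i))
        = ∑ j ∈ (r1 i).index,
            LinearMap.lTensor H (gadget K H)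
              ((r1 i).left j ⊗ₜ[K] ((r1 i).right j ⊗ₜ[K] r.right i)) := by
    intro i _
    rw [TensorProduct.map_tmul]
    have hb : betaH K H (r.left i)
        = ∑ j ∈ (r1 i).index, (r1 i).left j ⊗ₜ[K] SH K H ((r1 i).right j) := by
      rw [betaH_apply, show ΔH K H (r.left i)
        = ∑ j ∈ (r1 i).index, (r1 i).left j ⊗ₜ[K] (r1 i).right j from (r1 i).eq.symm,
        map_sum]
      simp
    rw [hb, TensorProduct.sum_tmul, map_sum]
    refine Finset.sum_congr rfl fun j _ => ?_
    rw [J_tmul_left, ← gadget_tmul, LinearMap.lTensor_tmul]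
  rw [Finset.sum_congr rfl step1]
  simp only [← map_sum]
  rw [Coalgebra.sum_tmul_tmul_eq (R := K) r r1 r2]
  simp only [map_sum, LinearMap.lTensor_tmul]
  refine Finset.sum_congr rfl fun i _ => ?_
  rw [← TensorProduct.tmul_sum, ← map_sum,
    show (∑ j ∈ (r2 i).index, (r2 i).left j ⊗ₜ[K] (r2 i).right j)
      = ΔH K H (r.right i) from (r2 i).eq,
    gadget_comul_apply, oneS_apply]

end PsiDeltaSec
section XLayer

/-- `dia3 (p ⊗ q) w = (p ⊗ 1) * w * (1 ⊗ (1 ⊗ q))`. -/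
def dia3 : (H ⊗[K] H) →ₗ[K] (H ⊗[K] (H ⊗[K] H)) →ₗ[K] (H ⊗[K] (H ⊗[K] H)) :=
  TensorProduct.lift <| LinearMap.mk₂ K
    (fun p q => LinearMap.mulLeft K (p ⊗ₜ[K] (1 : H ⊗[K] H)) ∘ₗ
      LinearMap.mulRight K ((1:H) ⊗ₜ[K] ((1:H) ⊗ₜ[K] q)))
    (fun a a' b => by ext z; simp [TensorProduct.add_tmul, add_mul])
    (fun c a b => by ext z; simp [TensorProduct.smul_tmul', smul_mul_assoc])
    (fun a b b' => by ext z; simp [TensorProduct.tmul_add, mul_add])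
    (fun c a b => by ext z; simp [TensorProduct.tmul_smul, mul_smul_comm])

variable {K H}

@[simp] lemma dia3_tmul (p q a s t : H) :
    dia3 K H (p ⊗ₜ[K] q) (a ⊗ₜ[K] (s ⊗ₜ[K] t))
      = (p * a) ⊗ₜ[K] (s ⊗ₜ[K] (t * q)) := by
  simp [dia3, Algebra.TensorProduct.tmul_mul_tmul, one_A2]

lemma dia_flip_tmul (c d : H) :
    (dia K H).flip (c ⊗ₜ[K] d)
      = TensorProduct.map (LinearMap.mulRight K c) (LinearMap.mulLeft K d) := by
  apply LinearMap.ext; intro z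
  induction z using TensorProduct.induction_on with
  | zero => simp
  | tmul a b => simp
  | add u v hu hv => simp only [map_add, LinearMap.add_apply, hu, hv]

lemma beta_mR (c : H) :
    betaH K H ∘ₗ LinearMap.mulRight K c
      = (dia K H).flip (betaH K H c) ∘ₗ betaH K H := by
  apply LinearMap.ext; intro p
  simp only [LinearMap.comp_apply, LinearMap.mulRight_apply, LinearMap.flip_apply]
  rw [betaH_apply, show ΔH K H (p * c) = ΔH K H p * ΔH K H c by simp [ΔH],
    ← diaS0, ← betaH_apply, ← betaH_apply]

lemma JKey (u : H) (x y : H ⊗[K] H) :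
    Jm K H (TensorProduct.map ((dia K H).flip x ∘ₗ betaH K H)
        ((dia K H).flip y ∘ₗ betaH K H) (ΔH K H u))
      = dia3 K H (betaH K H u) (Jm K H (x ⊗ₜ[K] y)) := by
  induction x using TensorProduct.induction_on with
  | zero => simp [TensorProduct.zero_tmul]
  | tmul c d =>
    induction y using TensorProduct.induction_on with
    | zero => simp [TensorProduct.tmul_zero]
    | tmul c' d' =>
      rw [dia_flip_tmul, dia_flip_tmul]
      rw [show TensorProduct.map
            (TensorProduct.map (LinearMap.mulRight K c) (LinearMap.mulLeft K d) ∘ₗ betaH K H)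
            (TensorProduct.map (LinearMap.mulRight K c') (LinearMap.mulLeft K d') ∘ₗ betaH K H)
            (ΔH K H u)
          = TensorProduct.map
              (TensorProduct.map (LinearMap.mulRight K c) (LinearMap.mulLeft K d))
              (TensorProduct.map (LinearMap.mulRight K c') (LinearMap.mulLeft K d'))
              (TensorProduct.map (betaH K H) (betaH K H) (ΔH K H u)) from by
        conv_rhs => rw [← LinearMap.comp_apply, ← TensorProduct.map_comp]]
      rw [J_deco, show Jm K H (TensorProduct.map (betaH K H) (betaH K H) (ΔH K H u))
          = PsiM K H (ΔH K H u) from rfl, PsiDelta, Jm_tmul]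
      have cmp : ∀ z : H ⊗[K] H,
          TensorProduct.map (LinearMap.mulRight K c)
            (TensorProduct.map (LinearMap.mulLeft K d ∘ₗ LinearMap.mulRight K c')
              (LinearMap.mulLeft K d'))
            (LinearMap.lTensor H (oneS K H) z)
          = dia3 K H (LinearMap.lTensor H (SH K H) z)
              (c ⊗ₜ[K] ((d * c') ⊗ₜ[K] d')) := by
        intro z
        induction z using TensorProduct.induction_on with
        | zero => simp
        | tmul p q => simp [oneS_apply, mul_assoc]
        | add w w' hw hw' => simp only [map_add, LinearMap.add_apply, hw, hw']
      rw [cmp, ← betaH_apply]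
    | add w w' hw hw' =>
      simp only [map_add, LinearMap.add_comp, TensorProduct.map_add_right,
        TensorProduct.map_add_left, LinearMap.add_apply, TensorProduct.tmul_add, hw, hw']
  | add w w' hw hw' =>
    simp only [map_add, LinearMap.add_comp, TensorProduct.map_add_right,
      TensorProduct.map_add_left, LinearMap.add_apply, TensorProduct.add_tmul, hw, hw']

lemma PsiKey (u : H) (w : H ⊗[K] H) :
    PsiM K H (ΔH K H u * w) = dia3 K H (betaH K H u) (PsiM K H w) := by
  induction w using TensorProduct.induction_on with
  | zero => simp
  | tmul c d =>
    rw [mul_tmul_eq]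
    have h1 : PsiM K H (TensorProduct.map (LinearMap.mulRight K c)
          (LinearMap.mulRight K d) (ΔH K H u))
        = Jm K H (TensorProduct.map ((dia K H).flip (betaH K H c) ∘ₗ betaH K H)
            ((dia K H).flip (betaH K H d) ∘ₗ betaH K H) (ΔH K H u)) := by
      rw [PsiM, LinearMap.comp_apply, ← beta_mR, ← beta_mR]
      congr 1
      rw [← LinearMap.comp_apply, ← TensorProduct.map_comp]
    rw [h1, JKey, PsiM_tmul]
  | add w w' hw hw' => simp only [mul_add, map_add, hw, hw']

set_option synthInstance.maxHeartbeats 400000 in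
lemma thetac_assoc (P : H ⊗[K] H) (e : H) :
    ThM K H ((TensorProduct.assoc K H H H) (P ⊗ₜ[K] e))
      = LinearMap.lTensor H (LinearMap.mulRight K e)
          (LinearMap.lTensor H (SH K H) P) := by
  induction P using TensorProduct.induction_on with
  | zero => simp
  | tmul x y => simp
  | add u v hu hv => simp only [TensorProduct.add_tmul, map_add, hu, hv]

lemma thetac_tmul (b e : H) :
    thetac K H (b ⊗ₜ[K] e)
      = LinearMap.lTensor H (LinearMap.mulRight K e) (betaH K H b) := by
  rw [thetac_apply, comulLeft_tmul, thetac_assoc, betaH_apply]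

end XLayer
section StarCollapseSec

variable {K H}

lemma sc1 (a b e : H) (z : H ⊗[K] H) :
    ThM K H (TensorProduct.map (LinearMap.mulRight K a)
        (TensorProduct.map (LinearMap.mulRight K b) (LinearMap.mulRight K e))
        (LinearMap.lTensor H (ΔH K H) z))
      = TensorProduct.map (LinearMap.mulRight K a)
          ((εH K H).smulRight (SH K H b * e)) z := by
  induction z using TensorProduct.induction_on with
  | zero => simp
  | tmul p q =>
    simp only [LinearMap.lTensor_tmul, TensorProduct.map_tmul, ThM_tmul,
      LinearMap.smulRight_apply]
    rw [Th_map_mR, Th_comul, algebraMap_mul'', mul_smul_comm]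
  | add u v hu hv => simp only [map_add, hu, hv]

lemma sc2 (a c₀ : H) (v : H) :
    TensorProduct.map (LinearMap.mulRight K a) ((εH K H).smulRight c₀) (ΔH K H v)
      = (v * a) ⊗ₜ[K] c₀ := by
  have h1 : (εH K H).smulRight c₀
      = LinearMap.toSpanSingleton K H c₀ ∘ₗ εH K H := by
    ext q; simp
  rw [h1, show TensorProduct.map (LinearMap.mulRight K a)
        (LinearMap.toSpanSingleton K H c₀ ∘ₗ εH K H)
      = TensorProduct.map (LinearMap.mulRight K a) (LinearMap.toSpanSingleton K H c₀)
          ∘ₗ LinearMap.lTensor H (εH K H) from by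
    rw [LinearMap.lTensor, ← TensorProduct.map_comp, LinearMap.comp_id]]
  rw [LinearMap.comp_apply, show LinearMap.lTensor H (εH K H) (ΔH K H v)
      = v ⊗ₜ[K] (1:K) from Coalgebra.lTensor_counit_comul v]
  simp

lemma thM_split_mul (v : H) (A : H ⊗[K] (H ⊗[K] H)) :
    ThM K H (LinearMap.lTensor H (ΔH K H) (ΔH K H v) * A)
      = (v ⊗ₜ[K] (1:H)) * ThM K H A := by
  induction A using TensorProduct.induction_on with
  | zero => simp
  | tmul a B =>
    induction B using TensorProduct.induction_on with
    | zero => simp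
    | tmul b e =>
      rw [mulA3, sc1, sc2, ThM_tmul, Th_tmul, Algebra.TensorProduct.tmul_mul_tmul,
        one_mul]
    | add u w hu hw => simp only [TensorProduct.tmul_add, mul_add, map_add, hu, hw]
  | add u w hu hw => simp only [mul_add, map_add, hu, hw]

lemma thetac_comul_mul (v : H) (y : H ⊗[K] H) :
    thetac K H (ΔH K H v * y) = (v ⊗ₜ[K] (1:H)) * thetac K H y := by
  have hco : comulLeft K H (ΔH K H v)
      = LinearMap.lTensor H (ΔH K H) (ΔH K H v) := by
    rw [comulLeft, LinearMap.comp_apply, LinearEquiv.coe_coe]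
    exact Coalgebra.coassoc_apply v
  rw [thetac_apply, comulLeft_mul, hco, thM_split_mul, ← thetac_apply]

end StarCollapseSec

section XiSec

variable {K H}

lemma finalMul_tmul (B : H ⊗[K] H) (e : H) :
    finalMul K H (B ⊗ₜ[K] e) = LinearMap.lTensor H (LinearMap.mulRight K e) B := by
  induction B using TensorProduct.induction_on with
  | zero => simp [finalMul]
  | tmul x y => simp [finalMul]
  | add u w hu hw => rw [TensorProduct.add_tmul, map_add, hu, hw, map_add]

set_option synthInstance.maxHeartbeats 400000 in
lemma lT_finalMul_assoc (X : H ⊗[K] (H ⊗[K] H)) (e : H) :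
    LinearMap.lTensor H (finalMul K H)
        ((TensorProduct.assoc K H (H ⊗[K] H) H) (X ⊗ₜ[K] e))
      = LinearMap.lTensor H (LinearMap.lTensor H (LinearMap.mulRight K e)) X := by
  induction X using TensorProduct.induction_on with
  | zero => simp
  | tmul a B => rw [TensorProduct.assoc_tmul, LinearMap.lTensor_tmul, finalMul_tmul,
      LinearMap.lTensor_tmul]
  | add u w hu hw => rw [TensorProduct.add_tmul, map_add, map_add, hu, hw, map_add]

lemma Xi_u (u : H) (A : H ⊗[K] H) :
    XiM K H (u ⊗ₜ[K] A) = Jm K H (betaH K H u ⊗ₜ[K] thetac K H A) := by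
  induction A using TensorProduct.induction_on with
  | zero => simp [thetac]
  | tmul b e =>
    rw [XiM]
    simp only [LinearMap.comp_apply, LinearEquiv.coe_coe]
    rw [TensorProduct.assoc_symm_tmul, LinearMap.rTensor_tmul, lT_finalMul_assoc,
      PsiM_tmul, J_last, ← thetac_tmul]
  | add x y hx hy => rw [TensorProduct.tmul_add, map_add, hx, hy, map_add,
      TensorProduct.tmul_add, map_add]

lemma iota_mul (e : H) (z y : H ⊗[K] H) :
    LinearMap.lTensor H ((TensorProduct.mk K H H).flip e) z * ins3 K H y
      = LinearMap.lTensor H ((TensorProduct.mk K H H).flip e) (z * y) := by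
  induction z using TensorProduct.induction_on with
  | zero => simp
  | tmul p q =>
    induction y using TensorProduct.induction_on with
    | zero => simp
    | tmul c d => simp [Algebra.TensorProduct.tmul_mul_tmul]
    | add u w hu hw => rw [map_add, mul_add, hu, hw, mul_add, map_add]
  | add u w hu hw => rw [map_add, add_mul, hu, hw, add_mul, map_add]

lemma assoc_tmul_flip (P : H ⊗[K] H) (v : H) :
    (TensorProduct.assoc K H H H) (P ⊗ₜ[K] v)
      = LinearMap.lTensor H ((TensorProduct.mk K H H).flip v) P := by
  induction P using TensorProduct.induction_on with
  | zero => simp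
  | tmul p q => simp
  | add x y hx hy => rw [TensorProduct.add_tmul, map_add, hx, hy, map_add]

lemma comulLeft_tmul_iota (u v : H) :
    comulLeft K H (u ⊗ₜ[K] v)
      = LinearMap.lTensor H ((TensorProduct.mk K H H).flip v) (ΔH K H u) := by
  rw [comulLeft_tmul, assoc_tmul_flip]

lemma Xi_iota (e : H) (z : H ⊗[K] H) :
    XiM K H (LinearMap.lTensor H ((TensorProduct.mk K H H).flip e) z)
      = LinearMap.lTensor H (LinearMap.lTensor H (LinearMap.mulRight K e))
          (PsiM K H z) := by
  induction z using TensorProduct.induction_on with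
  | zero => simp
  | tmul p q =>
    rw [LinearMap.lTensor_tmul,
      show ((TensorProduct.mk K H H).flip e) q = q ⊗ₜ[K] e from rfl, XiM]
    simp only [LinearMap.comp_apply, LinearEquiv.coe_coe]
    rw [TensorProduct.assoc_symm_tmul, LinearMap.rTensor_tmul, lT_finalMul_assoc]
  | add x y hx hy => rw [map_add, map_add, hx, hy, map_add, map_add]

lemma dia3_mulRight (v : H) (P : H ⊗[K] H) (w : H ⊗[K] (H ⊗[K] H)) :
    LinearMap.lTensor H (LinearMap.lTensor H (LinearMap.mulRight K v))
        (dia3 K H P w)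
      = dia3 K H (LinearMap.lTensor H (LinearMap.mulRight K v) P) w := by
  induction P using TensorProduct.induction_on with
  | zero => simp
  | tmul p q =>
    induction w using TensorProduct.induction_on with
    | zero => simp
    | tmul a C =>
      induction C using TensorProduct.induction_on with
      | zero => simp
      | tmul s t => simp [mul_assoc]
      | add x y hx hy => rw [TensorProduct.tmul_add, map_add, map_add, hx, hy, map_add]
    | add x y hx hy => rw [map_add, map_add, hx, hy, map_add]
  | add x y hx hy => simp only [map_add, LinearMap.add_apply, hx, hy]

lemma X1 (x y : H ⊗[K] H) :
    XiM K H (comulLeft K H x * ins3 K H y)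
      = dia3 K H (thetac K H x) (PsiM K H y) := by
  induction x using TensorProduct.induction_on with
  | zero => simp
  | tmul u v =>
    rw [comulLeft_tmul_iota, iota_mul, Xi_iota, PsiKey, dia3_mulRight, ← thetac_tmul]
  | add x' y' hx hy => simp only [map_add, add_mul, LinearMap.add_apply, hx, hy]

lemma X2 (x y : H ⊗[K] H) :
    XiM K H (comulRight K H x * ins1 K H y)
      = Jm K H (thetac K H x ⊗ₜ[K] thetac K H y) := by
  induction x using TensorProduct.induction_on with
  | zero => simp
  | tmul u v =>
    rw [comulRight_tmul, ins1_apply, Algebra.TensorProduct.tmul_mul_tmul, mul_one,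
      Xi_u, thetac_comul_mul, J_shift, ← thetac_tmul]
  | add x' y' hx hy =>
    simp only [map_add, add_mul, TensorProduct.add_tmul, hx, hy]

lemma bigIdentity {F Finv : H ⊗[K] H} (hF : IsTwist K H F Finv) :
    dia3 K H (thetac K H Finv) (PsiM K H Finv)
      = Jm K H (thetac K H Finv ⊗ₜ[K] thetac K H Finv) := by
  rw [← X1, ← X2, invCo hF]

end XiSec
section ModuleLayer

variable {K H}

lemma twistEnd_tmul {M : Type*} [AddCommGroup M] [Module K M]
    (F1 F2 : H →ₗ[K] M →ₗ[K] M) (a b : H) :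
    twistEnd K H F1 F2 (a ⊗ₜ[K] b) = F1 a ∘ₗ F2 b := by
  simp [twistEnd]; rfl

variable {M : Type*} [AddCommGroup M] [Module K M]
variable {m : M →ₗ[K] M →ₗ[K] M} {L Rm : H →ₗ[K] M →ₗ[K] M}

lemma rep_dia (h𝔸 : IsHBimoduleAlgebra K H m L Rm) (x y : H ⊗[K] H) (P : M) :
    twistEnd K H L Rm (dia K H x y) P
      = twistEnd K H L Rm x (twistEnd K H L Rm y P) := by
  induction x using TensorProduct.induction_on with
  | zero => simp
  | tmul a b =>
    induction y using TensorProduct.induction_on with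
    | zero => simp
    | tmul c d =>
      rw [dia_tmul, twistEnd_tmul, twistEnd_tmul, twistEnd_tmul]
      simp only [LinearMap.comp_apply]
      rw [h𝔸.left_mul, h𝔸.right_mul, h𝔸.commute]
    | add u v hu hv => simp only [map_add, LinearMap.add_apply, hu, hv]
  | add u v hu hv => simp only [map_add, LinearMap.add_apply, hu, hv]

lemma rep_one (h𝔸 : IsHBimoduleAlgebra K H m L Rm) (P : M) :
    twistEnd K H L Rm (1 : H ⊗[K] H) P = P := by
  rw [one_A2, twistEnd_tmul, LinearMap.comp_apply, h𝔸.right_one, h𝔸.left_one]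

lemma adjAct_eq (ξ : H) :
    adjAct K H L Rm ξ = twistEnd K H L Rm (betaH K H ξ) := by
  rw [adjAct, LinearMap.comp_apply, betaH_apply]
  generalize (ΔH K H ξ) = z
  induction z using TensorProduct.induction_on with
  | zero => simp
  | tmul a b => rw [twistEnd_tmul, LinearMap.lTensor_tmul, twistEnd_tmul]; rfl
  | add u v hu hv => rw [map_add, map_add, map_add, hu, hv]

lemma rep_Rm (h𝔸 : IsHBimoduleAlgebra K H m L Rm) (b : H) (z : H ⊗[K] H) (P : M) :
    Rm b (twistEnd K H L Rm z P)
      = twistEnd K H L Rm (LinearMap.lTensor H (LinearMap.mulRight K b) z) P := by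
  induction z using TensorProduct.induction_on with
  | zero => simp
  | tmul p q =>
    rw [twistEnd_tmul, LinearMap.lTensor_tmul, twistEnd_tmul]
    simp only [LinearMap.comp_apply, LinearMap.mulRight_apply]
    rw [← h𝔸.commute, h𝔸.right_mul]
  | add u v hu hv => simp only [map_add, LinearMap.add_apply, hu, hv]

lemma DF_rep (h𝔸 : IsHBimoduleAlgebra K H m L Rm) (x : H ⊗[K] H) (P : M) :
    twistEnd K H Rm (adjAct K H L Rm) ((TensorProduct.comm K H H) x) P
      = twistEnd K H L Rm (thetac K H x) P := by
  induction x using TensorProduct.induction_on with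
  | zero => simp
  | tmul a b =>
    rw [TensorProduct.comm_tmul, twistEnd_tmul, LinearMap.comp_apply, adjAct_eq,
      rep_Rm h𝔸, ← thetac_tmul]
  | add u v hu hv => simp only [map_add, LinearMap.add_apply, hu, hv]

variable (m L Rm) in
/-- `G3 (a ⊗ (s ⊗ d)) = Rm d (m (L a P) (L s Q))`. -/
def G3 (P Q : M) : H ⊗[K] (H ⊗[K] H) →ₗ[K] M :=
  TensorProduct.lift
    { toFun := fun a => TensorProduct.lift (LinearMap.mk₂ K
        (fun s d => Rm d (m (L a P) (L s Q)))
        (fun s s' _ => by simp)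
        (fun c s _ => by simp)
        (fun s d d' => by simp)
        (fun c s d => by simp))
      map_add' := fun a a' => by
        apply TensorProduct.ext'; intro s d; simp
      map_smul' := fun c a => by
        apply TensorProduct.ext'; intro s d; simp }

@[simp] lemma G3_tmul (P Q : M) (a s d : H) :
    G3 m L Rm P Q (a ⊗ₜ[K] (s ⊗ₜ[K] d)) = Rm d (m (L a P) (L s Q)) := by
  simp [G3]

lemma rep_m_G (h𝔸 : IsHBimoduleAlgebra K H m L Rm) (P Q : M) (x : H ⊗[K] H) :
    twistEnd K H L Rm x (m P Q)
      = G3 m L Rm P Q (LinearMap.lTensor H (TensorProduct.mk K H H 1) x) := by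
  induction x using TensorProduct.induction_on with
  | zero => simp
  | tmul a b =>
    rw [twistEnd_tmul, LinearMap.lTensor_tmul,
      show (TensorProduct.mk K H H 1) b = (1:H) ⊗ₜ[K] b from rfl, G3_tmul]
    simp only [LinearMap.comp_apply]
    rw [h𝔸.assoc1, h𝔸.assoc3, h𝔸.left_one, h𝔸.assoc1]
  | add u v hu hv => simp only [map_add, LinearMap.add_apply, hu, hv]

lemma M2 (h𝔸 : IsHBimoduleAlgebra K H m L Rm) (P Q : M) (x y : H ⊗[K] H) :
    m (twistEnd K H L Rm x P) (twistEnd K H L Rm y Q)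
      = G3 m L Rm P Q (Jm K H (x ⊗ₜ[K] y)) := by
  induction x using TensorProduct.induction_on with
  | zero => simp
  | tmul a b =>
    induction y using TensorProduct.induction_on with
    | zero => simp
    | tmul c d =>
      rw [Jm_tmul, G3_tmul, twistEnd_tmul, twistEnd_tmul]
      simp only [LinearMap.comp_apply]
      rw [h𝔸.commute, h𝔸.assoc2, ← h𝔸.left_mul, h𝔸.commute, ← h𝔸.assoc1]
    | add u v hu hv =>
      simp only [map_add, LinearMap.add_apply, TensorProduct.tmul_add, hu, hv]
  | add u v hu hv =>
    simp only [map_add, LinearMap.add_apply, TensorProduct.add_tmul, hu, hv]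

lemma rep_G3 (h𝔸 : IsHBimoduleAlgebra K H m L Rm) (P Q : M)
    (z : H ⊗[K] H) (w : H ⊗[K] (H ⊗[K] H)) :
    twistEnd K H L Rm z (G3 m L Rm P Q w) = G3 m L Rm P Q (dia3 K H z w) := by
  induction z using TensorProduct.induction_on with
  | zero => simp
  | tmul p q =>
    induction w using TensorProduct.induction_on with
    | zero => simp
    | tmul a C =>
      induction C using TensorProduct.induction_on with
      | zero => simp
      | tmul s t =>
        rw [dia3_tmul, G3_tmul, G3_tmul, twistEnd_tmul]
        simp only [LinearMap.comp_apply]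
        rw [← h𝔸.right_mul, h𝔸.assoc1, h𝔸.assoc3, ← h𝔸.left_mul, h𝔸.assoc1]
      | add u v hu hv =>
        simp only [TensorProduct.tmul_add, map_add, LinearMap.add_apply, hu, hv]
    | add u v hu hv => simp only [map_add, LinearMap.add_apply, hu, hv]
  | add u v hu hv => simp only [map_add, LinearMap.add_apply, hu, hv]

lemma sw_eval {V W V' W' Z : Type*}
    [AddCommGroup V] [Module K V] [AddCommGroup W] [Module K W]
    [AddCommGroup V'] [Module K V'] [AddCommGroup W'] [Module K W']
    [AddCommGroup Z] [Module K Z]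
    (x : H ⊗[K] H) (f : H →ₗ[K] V →ₗ[K] V') (g : H →ₗ[K] W →ₗ[K] W')
    (c : V' →ₗ[K] W' →ₗ[K] Z) (v : V) (w : W) :
    sw K H x f g c v w
      = TensorProduct.lift c (TensorProduct.map (f.flip v) (g.flip w) x) := rfl

lemma star_eq (h𝔸 : IsHBimoduleAlgebra K H m L Rm) (P Q : M) (x : H ⊗[K] H) :
    sw K H x (adjAct K H L Rm) (adjAct K H L Rm) m P Q
      = G3 m L Rm P Q (PsiM K H x) := by
  rw [sw_eval]
  induction x using TensorProduct.induction_on with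
  | zero => simp
  | tmul u v =>
    rw [TensorProduct.map_tmul, TensorProduct.lift.tmul]
    simp only [LinearMap.flip_apply]
    rw [adjAct_eq, adjAct_eq, M2 h𝔸, PsiM_tmul]
  | add u v hu hv => simp only [map_add, LinearMap.add_apply, hu, hv]

end ModuleLayer
/-- the adjoint action `ξ ▶ P = ξ₁ P S(ξ₂)` makes `𝔸` a left
`H`-module algebra, and for any twist `F` of `H` the map
`D_F(P) = (f̄^α ▶ P) f̄_α` is an algebra isomorphism `𝔸_⋆ → 𝔸`. -/
theorem DF_algebra_isomorphism (F Finv : H ⊗[K] H) (hF : IsTwist K H F Finv)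
    (m : M →ₗ[K] M →ₗ[K] M) (L Rm : H →ₗ[K] M →ₗ[K] M)
    (h𝔸 : IsHBimoduleAlgebra K H m L Rm) :
    -- the adjoint action is a left H-module structure ...
    IsHAction K H (adjAct K H L Rm)
    -- ... satisfying the module-algebra (Leibniz) property
    ∧ (∀ (ξ : H) (P Q : M),
        adjAct K H L Rm ξ (m P Q)
          = sw K H (ΔH K H ξ) (adjAct K H L Rm) (adjAct K H L Rm) m P Q)
    -- D_F is bijective ...
    ∧ Function.Bijective (DF K H Finv L Rm)
    -- ... and an algebra homomorphism from 𝔸_⋆ to 𝔸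
    ∧ (∀ P Q : M,
        DF K H Finv L Rm (starAlg K H Finv m L Rm P Q)
          = m (DF K H Finv L Rm P) (DF K H Finv L Rm Q)) := by
  have hβ1 : betaH K H (1:H) = (1 : H ⊗[K] H) := by
    rw [betaH_apply, show ΔH K H (1:H) = 1 by simp [ΔH], one_A2,
      LinearMap.lTensor_tmul, S_one, ← one_A2]
  have hDF : ∀ P : M, DF K H Finv L Rm P
      = twistEnd K H L Rm (thetac K H Finv) P := fun P => DF_rep h𝔸 Finv P
  have hstar : ∀ P Q : M, starAlg K H Finv m L Rm P Q
      = G3 m L Rm P Q (PsiM K H Finv) := fun P Q => star_eq h𝔸 P Q Finv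
  refine ⟨⟨?_, ?_⟩, ?_, ?_, ?_⟩
  · -- action property
    intro ξ ζ v
    have hb : betaH K H (ξ * ζ) = dia K H (betaH K H ξ) (betaH K H ζ) := by
      rw [betaH_apply, betaH_apply, betaH_apply, diaS0,
        show ΔH K H ξ * ΔH K H ζ = ΔH K H (ξ * ζ) by simp [ΔH]]
    rw [adjAct_eq, adjAct_eq, adjAct_eq, hb, rep_dia h𝔸]
  · -- unit property
    intro v
    rw [adjAct_eq, hβ1, rep_one h𝔸]
  · -- Leibniz rule
    intro ξ P Q
    rw [star_eq h𝔸 P Q (ΔH K H ξ), adjAct_eq, rep_m_G h𝔸, PsiDelta]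
    congr 1
    rw [betaH_apply, ← LinearMap.comp_apply, ← LinearMap.lTensor_comp]
    rfl
  · -- bijectivity
    rw [Function.bijective_iff_has_inverse]
    refine ⟨fun P => twistEnd K H L Rm
      (LinearMap.lTensor H (LinearMap.mulLeft K (chi K H F) ∘ₗ SH K H) Finv) P,
      ?_, ?_⟩
    · intro P
      show twistEnd K H L Rm
          (LinearMap.lTensor H (LinearMap.mulLeft K (chi K H F) ∘ₗ SH K H) Finv)
          (DF K H Finv L Rm P) = P
      rw [hDF, ← rep_dia h𝔸,
        show dia K H (LinearMap.lTensor H (LinearMap.mulLeft K (chi K H F) ∘ₗ SH K H) Finv)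
            (thetac K H Finv) = 1 from by
          rw [thetac_apply]; exact dia_t'_t hF,
        rep_one h𝔸]
    · intro P
      show DF K H Finv L Rm (twistEnd K H L Rm
          (LinearMap.lTensor H (LinearMap.mulLeft K (chi K H F) ∘ₗ SH K H) Finv) P) = P
      rw [hDF, ← rep_dia h𝔸,
        show dia K H (thetac K H Finv)
            (LinearMap.lTensor H (LinearMap.mulLeft K (chi K H F) ∘ₗ SH K H) Finv) = 1 from by
          rw [thetac_apply]; exact dia_t_t' hF,
        rep_one h𝔸]
  · -- homomorphism property
    intro P Q
    rw [hDF, hstar, rep_G3 h𝔸, bigIdentity hF, ← M2 h𝔸, ← hDF, ← hDF]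


end TwistPaper
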